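/- Let μ_B = 0.1, μ_a = 2μ_B/(1+a) for a ∈ [0,1], η ∈ (0,1), and I^I(a,η) = (η⁻¹ - 1)/(12/(e^{-μ_a}·μ_a²) - 1). Then I^I(a,η) is strictly decreasing in a on [0,1]. -/
import Mathlib


/-- With μ_B = 0.1, μ_a = 2μ_B/(1+a), and η ∈ (0,1),
    I^I(a,η) = (η⁻¹-1)/(12/(e^{-μ_a}·μ_a²)-1) is strictly decreasing in a on [0,1]. -/
theorem stmt_6 (μB : ℝ) (hμB : μB = 0.1)
    (μ : ℝ → ℝ) (hμ : ∀ a : ℝ, μ a = 2 * μB / (1 + a))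
    (η : ℝ) (hη : η ∈ Set.Ioo (0:ℝ) 1) :
    StrictAntiOn (fun a : ℝ => (η⁻¹ - 1) / (12 / (Real.exp (-μ a) * (μ a) ^ 2) - 1))
      (Set.Icc (0:ℝ) 1) := by
  obtain ⟨hη0, hη1⟩ := hη
  have hC : 0 < η⁻¹ - 1 := by
    have : 1 < η⁻¹ := (one_lt_inv₀ hη0).mpr hη1
    linarith
  intro a1 h1 a2 h2 h12
  simp only [Set.mem_Icc] at h1 h2
  have hμ1 : μ a1 = 0.2 / (1 + a1) := by rw [hμ a1, hμB]; norm_num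
  have hμ2 : μ a2 = 0.2 / (1 + a2) := by rw [hμ a2, hμB]; norm_num
  set m1 := μ a1 with hm1
  set m2 := μ a2 with hm2
  have hb1l : (0.1:ℝ) ≤ m1 := by
    rw [hμ1, le_div_iff₀ (by linarith)]; linarith [h1.2]
  have hb1u : m1 ≤ 0.2 := by
    rw [hμ1, div_le_iff₀ (by linarith)]; nlinarith [h1.1]
  have hb2l : (0.1:ℝ) ≤ m2 := by
    rw [hμ2, le_div_iff₀ (by linarith)]; linarith [h2.2]
  have hb2u : m2 ≤ 0.2 := by
    rw [hμ2, div_le_iff₀ (by linarith)]; nlinarith [h2.1]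
  have hmm : m2 < m1 := by
    rw [hμ1, hμ2]
    exact div_lt_div_of_pos_left (by norm_num) (by linarith [h1.1]) (by linarith)
  -- key: g2 < g1 where g = exp(-m) * m^2
  have hE2 : 0 < Real.exp (-m2) := Real.exp_pos _
  have hE1 : 0 < Real.exp (-m1) := Real.exp_pos _
  have hee : Real.exp (-m1) = Real.exp (-m2) * Real.exp (m2 - m1) := by
    rw [← Real.exp_add]; ring_nf
  have he : m2 - m1 + 1 < Real.exp (m2 - m1) := Real.add_one_lt_exp (by linarith)
  have hpoly : m2 ^ 2 < (m2 - m1 + 1) * m1 ^ 2 := by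
    nlinarith [mul_pos (sub_pos.mpr hmm) (show (0:ℝ) < m1 + m2 - m1 ^ 2 by nlinarith)]
  have key : Real.exp (-m2) * m2 ^ 2 < Real.exp (-m1) * m1 ^ 2 := by
    rw [hee]
    have h1' : Real.exp (-m2) * m2 ^ 2 < Real.exp (-m2) * ((m2 - m1 + 1) * m1 ^ 2) :=
      by exact (mul_lt_mul_iff_right₀ hE2).mpr hpoly
    have h2' : Real.exp (-m2) * ((m2 - m1 + 1) * m1 ^ 2) ≤
        Real.exp (-m2) * (Real.exp (m2 - m1) * m1 ^ 2) := by
      apply mul_le_mul_of_nonneg_left _ hE2.le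
      apply mul_le_mul_of_nonneg_right he.le (sq_nonneg _)
    calc Real.exp (-m2) * m2 ^ 2 < Real.exp (-m2) * ((m2 - m1 + 1) * m1 ^ 2) := h1'
      _ ≤ Real.exp (-m2) * Real.exp (m2 - m1) * m1 ^ 2 := by linarith [h2']
  have hg2pos : 0 < Real.exp (-m2) * m2 ^ 2 := by positivity
  have hg1pos : 0 < Real.exp (-m1) * m1 ^ 2 := by positivity
  have hg1small : Real.exp (-m1) * m1 ^ 2 < 12 := by
    have hle : Real.exp (-m1) ≤ 1 := Real.exp_le_one_iff.mpr (by linarith)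
    nlinarith
  have hD1 : 1 < 12 / (Real.exp (-m1) * m1 ^ 2) := (one_lt_div hg1pos).mpr hg1small
  have hDlt : 12 / (Real.exp (-m1) * m1 ^ 2) < 12 / (Real.exp (-m2) * m2 ^ 2) :=
    div_lt_div_of_pos_left (by norm_num) hg2pos key
  simp only
  exact div_lt_div_of_pos_left hC (by linarith) (by linarith)
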